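/- Let E and V be finite-dimensional real vector spaces with dim E = dim V, ρ : E → V and μ : E → V* linear maps satisfying the skewness condition μ(e₁)(ρ(e₂)) = −μ(e₂)(ρ(e₁)) for all e₁, e₂ ∈ E, and Ker(μ) ∩ Ker(ρ) = 0. Then the subspace L := { (ρ(e), μ(e)) : e ∈ E } of V × V* is Lagrangian with respect to the symmetric pairing ⟨(X,α),(Y,β)⟩ = α(Y) + β(X); that is, L = L^⊥ := { w ∈ V × V* : ⟨w,ℓ⟩ = 0 for all ℓ ∈ L }. -/

import Mathlib

/-- let `dim E = dim V`, `ρ : E → V`, `μ : E → V*` linear with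
`μ(e₁)(ρ(e₂)) = −μ(e₂)(ρ(e₁))` and `Ker(μ) ∩ Ker(ρ) = 0`.  Then
`L = { (ρ(e), μ(e)) : e ∈ E } ⊆ V × V*` is Lagrangian for the symmetric pairing
`⟨(X,α),(Y,β)⟩ = α(Y) + β(X)`, i.e. `L = L^⊥`. -/
theorem statement5 {E V : Type*} [AddCommGroup E] [Module ℝ E] [FiniteDimensional ℝ E]
    [AddCommGroup V] [Module ℝ V] [FiniteDimensional ℝ V]
    (hdim : Module.finrank ℝ E = Module.finrank ℝ V)
    (ρ : E →ₗ[ℝ] V) (μ : E →ₗ[ℝ] Module.Dual ℝ V)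
    (hskew : ∀ e₁ e₂ : E, μ e₁ (ρ e₂) = - μ e₂ (ρ e₁))
    (hnd : LinearMap.ker μ ⊓ LinearMap.ker ρ = ⊥) :
    ∀ w : V × Module.Dual ℝ V,
      w ∈ LinearMap.range (ρ.prod μ) ↔
        ∀ ℓ ∈ LinearMap.range (ρ.prod μ), w.2 ℓ.1 + ℓ.2 w.1 = 0 := by
  set L := LinearMap.range (ρ.prod μ) with hLdef
  let B : LinearMap.BilinForm ℝ (V × Module.Dual ℝ V) :=
    LinearMap.mk₂ ℝ (fun p q => p.2 q.1 + q.2 p.1)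
      (by intro p p' q; simp; ring)
      (by intro c p q; simp; ring)
      (by intro p q q'; simp; ring)
      (by intro c p q; simp; ring)
  have hB : ∀ p q, B p q = p.2 q.1 + q.2 p.1 := fun p q => rfl
  have hsymm : ∀ p q, B p q = B q p := by
    intro p q; simp only [hB]; ring
  have hrefl : B.IsRefl := fun p q h => by rw [hsymm] at h; exact h
  have hndB : B.Nondegenerate := by
    refine (LinearMap.IsRefl.nondegenerate_iff_separatingLeft hrefl).2 ?_
    intro p hp
    have h2 : p.2 = 0 := by
      ext y
      have := hp (y, 0)
      simpa [hB] using this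
    have h1 : p.1 = 0 := by
      rw [← Module.forall_dual_apply_eq_zero_iff ℝ]
      intro φ
      have := hp (0, φ)
      simpa [hB] using this
    exact Prod.ext h1 h2
  have hL_le : L ≤ B.orthogonal L := by
    rintro _ ⟨e, rfl⟩ _ ⟨e', rfl⟩
    simp only [LinearMap.BilinForm.IsOrtho, hB, LinearMap.prod_apply, Function.prod]
    rw [hskew e' e]; ring
  have hinj : Function.Injective (ρ.prod μ) := by
    rw [← LinearMap.ker_eq_bot, LinearMap.ker_prod, inf_comm]
    exact hnd
  have hdimL : Module.finrank ℝ L = Module.finrank ℝ V := by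
    rw [hLdef, LinearMap.finrank_range_of_inj hinj, hdim]
  have hdimP : Module.finrank ℝ (V × Module.Dual ℝ V)
      = Module.finrank ℝ V + Module.finrank ℝ V := by
    rw [Module.finrank_prod, Subspace.dual_finrank_eq]
  have hdimO : Module.finrank ℝ (B.orthogonal L) = Module.finrank ℝ V := by
    rw [LinearMap.BilinForm.finrank_orthogonal hndB, hdimP, hdimL]
    omega
  have hEq : L = B.orthogonal L := by
    apply Submodule.eq_of_le_of_finrank_le hL_le
    rw [hdimO, hdimL]
  intro w
  constructor
  · intro hw ℓ hℓ
    have := hEq ▸ hw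
    have h : ℓ.2 w.1 + w.2 ℓ.1 = 0 := this ℓ hℓ
    linarith
  · intro h
    rw [hEq]
    intro ℓ hℓ
    have := h ℓ hℓ
    show ℓ.2 w.1 + w.2 ℓ.1 = 0
    linarith
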